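/- Let G be a connected graph, k a natural number, and let F_0, F_1, … be infinitely many distinct bonds of G, each of size at most k, such that each bond F_n has a side A_n with A_n ⊊ A_m whenever n < m. Then the union of all A_n equals V(G). -/

import Mathlib

open SimpleGraph

variable {V : Type*}

/-- The cut induced by a side `A`: edges of `G` with one endpoint in `A` and one outside. -/
def cutEdges (G : SimpleGraph V) (A : Set V) : Set (Sym2 V) :=
  {e | ∃ u v, e = s(u, v) ∧ G.Adj u v ∧ u ∈ A ∧ v ∉ A}

/-- A cut-separation, given by a side `A`: both sides nonempty. -/
def IsCutSep (_G : SimpleGraph V) (A : Set V) : Prop :=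
  A.Nonempty ∧ Aᶜ.Nonempty

/-- A bond-separation: a cut-separation both of whose sides induce connected subgraphs. -/
def IsBondSep (G : SimpleGraph V) (A : Set V) : Prop :=
  A.Nonempty ∧ Aᶜ.Nonempty ∧ (G.induce A).Connected ∧ (G.induce Aᶜ).Connected

/-- Two separations (given by sides) are nested. -/
def Nested (A C : Set V) : Prop :=
  A ⊆ C ∨ A ⊆ Cᶜ ∨ Aᶜ ⊆ C ∨ Aᶜ ⊆ Cᶜ

/-- Two separations cross if they are not nested. -/
def Crosses (A C : Set V) : Prop := ¬ Nested A C

/-- `u` and `v` are (<k)-inseparable: no edge set of size < k separates them. -/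
def Insep (G : SimpleGraph V) (k : ℕ) (u v : V) : Prop :=
  ∀ F : Set (Sym2 V), F.Finite → F.ncard < k → (G.deleteEdges F).Reachable u v

/-- A k-edge-block: an equivalence class of (<k)-inseparability. -/
def IsEdgeBlock (G : SimpleGraph V) (k : ℕ) (B : Set V) : Prop :=
  ∃ v, B = {w | Insep G k v w}

/-- The edge set `F` separates `B₁` from `B₂` in `G`. -/
def SepSets (G : SimpleGraph V) (B₁ B₂ : Set V) (F : Set (Sym2 V)) : Prop :=
  ∀ u ∈ B₁, ∀ v ∈ B₂, ¬ (G.deleteEdges F).Reachable u v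

/-- The minimum size of an edge set separating `B₁` from `B₂`. -/
noncomputable def sepOrder (G : SimpleGraph V) (B₁ B₂ : Set V) : ℕ :=
  sInf {n | ∃ F : Set (Sym2 V), F.Finite ∧ F.ncard = n ∧ SepSets G B₁ B₂ F}

lemma mem_cutEdges_iff' {G : SimpleGraph V} {S : Set V} {u v : V} :
    s(u, v) ∈ cutEdges G S ↔ G.Adj u v ∧ ((u ∈ S ∧ v ∉ S) ∨ (v ∈ S ∧ u ∉ S)) := by
  constructor
  · rintro ⟨a, b, hab, hadj, ha, hb⟩
    rw [Sym2.eq_iff] at hab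
    rcases hab with ⟨rfl, rfl⟩ | ⟨rfl, rfl⟩
    · exact ⟨hadj, Or.inl ⟨ha, hb⟩⟩
    · exact ⟨hadj.symm, Or.inr ⟨ha, hb⟩⟩
  · rintro ⟨hadj, ⟨hu, hv⟩ | ⟨hv, hu⟩⟩
    · exact ⟨u, v, rfl, hadj, hu, hv⟩
    · exact ⟨v, u, Sym2.eq_swap.symm, hadj.symm, hv, hu⟩

/-- A walk from inside `S` to outside `S` uses an edge of the cut of `S`. -/
lemma walk_cross {G : SimpleGraph V} {S : Set V} {a b : V} (w : G.Walk a b)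
    (ha : a ∈ S) (hb : b ∉ S) : ∃ e ∈ w.edges, e ∈ cutEdges G S := by
  induction w with
  | nil => exact absurd ha hb
  | @cons u v c h p ih =>
    by_cases hv : v ∈ S
    · obtain ⟨e, he, hce⟩ := ih hv hb
      exact ⟨e, List.mem_cons_of_mem _ he, hce⟩
    · exact ⟨s(u, v), List.mem_cons_self,
        mem_cutEdges_iff'.2 ⟨h, Or.inl ⟨ha, hv⟩⟩⟩

/-- Uniform eventual bound over a list. -/
lemma list_bound {α : Type*} (l : List α) (Q : α → ℕ → Prop)
    (h : ∀ a ∈ l, ∃ N, ∀ n ≥ N, Q a n) :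
    ∃ N, ∀ n ≥ N, ∀ a ∈ l, Q a n := by
  induction l with
  | nil => exact ⟨0, fun n _ a ha => absurd ha List.not_mem_nil⟩
  | cons b l ih =>
    obtain ⟨N1, h1⟩ := h b List.mem_cons_self
    obtain ⟨N2, h2⟩ := ih fun a ha => h a (List.mem_cons_of_mem _ ha)
    refine ⟨max N1 N2, fun n hn a ha => ?_⟩
    rcases List.mem_cons.1 ha with rfl | ha
    · exact h1 n (le_trans (le_max_left _ _) hn)
    · exact h2 n (le_trans (le_max_right _ _) hn) a ha

/-- Corollary 2.2: a strictly increasing chain of sides of ≤k-sized bonds exhausts V. -/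
theorem stmt_1 (G : SimpleGraph V) (hG : G.Connected) (k : ℕ) (A : ℕ → Set V)
    (hbond : ∀ n, IsBondSep G (A n))
    (hfin : ∀ n, (cutEdges G (A n)).Finite)
    (hsize : ∀ n, (cutEdges G (A n)).ncard ≤ k)
    (hdist : ∀ m n, m ≠ n → cutEdges G (A m) ≠ cutEdges G (A n))
    (hmono : ∀ m n, m < n → A m ⊂ A n) :
    (⋃ n, A n) = Set.univ := by
  by_contra hne
  -- pick a vertex outside all the `A n`
  obtain ⟨x, hx⟩ : ∃ x, ∀ n, x ∉ A n := by
    rw [Set.eq_univ_iff_forall] at hne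
    push_neg at hne
    obtain ⟨x, hx⟩ := hne
    exact ⟨x, fun n hn => hx (Set.mem_iUnion.2 ⟨n, hn⟩)⟩
  -- monotonicity of the sides
  have hA : ∀ {m n : ℕ}, m ≤ n → A m ⊆ A n := by
    intro m n hmn
    rcases lt_or_eq_of_le hmn with h | rfl
    · exact (hmono m n h).subset
    · exact subset_rfl
  -- the set of "permanent" cut edges
  set P : Set (Sym2 V) :=
    {e | ∃ u v, e = s(u, v) ∧ G.Adj u v ∧ (∃ j, u ∈ A j) ∧ ∀ j, v ∉ A j} with hPdef
  -- permanent edges are eventually in every cut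
  have hPmem : ∀ e ∈ P, ∃ N, ∀ n ≥ N, e ∈ cutEdges G (A n) := by
    rintro e ⟨u, v, rfl, hadj, ⟨j, hu⟩, hv⟩
    exact ⟨j, fun n hn => mem_cutEdges_iff'.2 ⟨hadj, Or.inl ⟨hA hn hu, hv n⟩⟩⟩
  -- non-permanent edges are eventually in no cut
  have hnotP : ∀ e : Sym2 V, e ∉ P → ∃ N, ∀ n ≥ N, e ∉ cutEdges G (A n) := by
    intro e heP
    by_contra hcon
    push_neg at hcon
    obtain ⟨j0, hj0, hej0⟩ := hcon 0
    obtain ⟨u, v, rfl, hadj, hu, hv⟩ := hej0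
    have hvA : ∃ j1, v ∈ A j1 := by
      by_contra hnv
      push_neg at hnv
      exact heP ⟨u, v, rfl, hadj, ⟨j0, hu⟩, hnv⟩
    obtain ⟨j1, hv1⟩ := hvA
    obtain ⟨j, hj, hej⟩ := hcon (max j0 j1 + 1)
    have huj : u ∈ A j := hA (le_trans (le_trans (le_max_left _ _) (Nat.le_succ _)) hj) hu
    have hvj : v ∈ A j := hA (le_trans (le_trans (le_max_right _ _) (Nat.le_succ _)) hj) hv1
    rcases mem_cutEdges_iff'.1 hej with ⟨_, ⟨_, h2⟩ | ⟨_, h2⟩⟩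
    · exact h2 hvj
    · exact h2 huj
  -- P is finite
  have hPfin : P.Finite := by
    by_contra hinf
    replace hinf : P.Infinite := hinf
    obtain ⟨t, hts, htc⟩ := hinf.exists_subset_card_eq (k + 1)
    obtain ⟨N, hN⟩ := list_bound t.toList (fun e n => e ∈ cutEdges G (A n))
      (fun e he => hPmem e (hts (Finset.mem_toList.1 he)))
    have hsub : (t : Set (Sym2 V)) ⊆ cutEdges G (A N) := by
      intro e he
      exact hN N le_rfl e (Finset.mem_toList.2 he)
    have := Set.ncard_le_ncard hsub (hfin N)
    rw [Set.ncard_coe_finset, htc] at this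
    exact absurd (le_trans this (hsize N)) (by omega)
  -- uniform bound: all of P is in every late cut
  obtain ⟨N1, hN1⟩ : ∃ N, ∀ n ≥ N, P ⊆ cutEdges G (A n) := by
    obtain ⟨N, hN⟩ := list_bound hPfin.toFinset.toList (fun e n => e ∈ cutEdges G (A n))
      (fun e he => hPmem e (hPfin.mem_toFinset.1 (Finset.mem_toList.1 he)))
    exact ⟨N, fun n hn e he =>
      hN n hn e (Finset.mem_toList.2 (hPfin.mem_toFinset.2 he))⟩
  -- find n ≥ N1 with cutEdges G (A n) ≠ P
  obtain ⟨n, hn, hnP⟩ : ∃ n ≥ N1, cutEdges G (A n) ≠ P := by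
    by_cases h1 : cutEdges G (A N1) = P
    · refine ⟨N1 + 1, Nat.le_succ _, ?_⟩
      intro h2
      exact hdist N1 (N1 + 1) (by omega) (h1.trans h2.symm)
    · exact ⟨N1, le_rfl, h1⟩
  -- pick a transient edge in this cut
  obtain ⟨e, he, heP⟩ : ∃ e ∈ cutEdges G (A n), e ∉ P :=
    Set.exists_of_ssubset ((hN1 n hn).ssubset_of_ne (Ne.symm hnP))
  obtain ⟨u, v, rfl, hadj, hu, hv⟩ := he
  -- its outer endpoint eventually enters
  obtain ⟨m, hvm⟩ : ∃ m, v ∈ A m := by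
    by_contra hnv
    push_neg at hnv
    exact heP ⟨u, v, rfl, hadj, ⟨n, hu⟩, hnv⟩
  -- get a walk from v to x inside (A n)ᶜ
  have hconn := (hbond n).2.2.2
  have hvx : ((G.induce (A n)ᶜ)).Reachable ⟨v, hv⟩ ⟨x, hx n⟩ := hconn ⟨v, hv⟩ ⟨x, hx n⟩
  obtain ⟨w0⟩ := hvx
  let w : G.Walk v x := w0.map (SimpleGraph.Embedding.induce ((A n)ᶜ : Set V)).toHom
  have hsupp : ∀ y ∈ w.support, y ∉ A n := by
    intro y hy
    rw [show w.support = _ from SimpleGraph.Walk.support_map _ _, List.mem_map] at hy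
    obtain ⟨⟨z, hz⟩, _, rfl⟩ := hy
    exact hz
  -- the walk must use a permanent edge
  obtain ⟨f, hf, hfP⟩ : ∃ f ∈ w.edges, f ∈ P := by
    by_contra hcon
    push_neg at hcon
    obtain ⟨N2, hN2⟩ := list_bound w.edges (fun e n => e ∉ cutEdges G (A n))
      (fun e he => hnotP e (hcon e he))
    set j := max N2 m with hj
    have hvj : v ∈ A j := hA (le_max_right _ _) hvm
    obtain ⟨f, hfw, hfc⟩ := walk_cross w hvj (hx j)
    exact hN2 j (le_max_left _ _) f hfw hfc
  -- but permanent edges have an endpoint in A n, while the walk avoids A n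
  have hfn : f ∈ cutEdges G (A n) := hN1 n hn hfP
  obtain ⟨p, q, rfl, hpq, hp, hq⟩ := hfn
  exact hsupp p (SimpleGraph.Walk.fst_mem_support_of_mem_edges w hf) hp
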